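/- Let S be a skew-symmetric real n×n matrix. Then for every ε > 0 and every T > 0 there exists t ≥ T such that ‖exp(t·S) − I‖ < ε; in other words, there is a sequence t_k → +∞ with exp(t_k·S) converging to the identity matrix. -/

import Mathlib

open Matrix
attribute [local instance] Matrix.frobeniusNormedAddCommGroup
attribute [local instance] Matrix.frobeniusNormedSpace

section aux

variable {n : ℕ}

lemma exp_smul_mul_exp_smul (S : Matrix (Fin n) (Fin n) ℝ) (a b : ℝ) :
    NormedSpace.exp (a • S) * NormedSpace.exp (b • S) = NormedSpace.exp ((a + b) • S) := by
  rw [add_smul, Matrix.exp_add_of_commute]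
  exact ((Commute.refl S).smul_left a).smul_right b

lemma exp_skew_orthogonal (S : Matrix (Fin n) (Fin n) ℝ) (hS : Sᵀ = -S) (t : ℝ) :
    (NormedSpace.exp (t • S))ᵀ * NormedSpace.exp (t • S) = 1 := by
  rw [← Matrix.exp_transpose, Matrix.transpose_smul, hS, smul_neg, ← neg_smul,
    exp_smul_mul_exp_smul, neg_add_cancel, zero_smul, NormedSpace.exp_zero]

lemma norm_of_orthogonal {Q : Matrix (Fin n) (Fin n) ℝ} (hQ : Qᵀ * Q = 1) :
    ‖Q‖ = Real.sqrt n := by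
  have key : ∑ i, ∑ j, ‖Q i j‖ ^ (2 : ℝ) = (n : ℝ) := by
    calc ∑ i, ∑ j, ‖Q i j‖ ^ (2 : ℝ) = ∑ j, ∑ i, Qᵀ j i * Q i j := by
          rw [Finset.sum_comm]
          simp [Real.rpow_two, Real.norm_eq_abs, sq_abs, Matrix.transpose_apply, sq]
      _ = ∑ j, (Qᵀ * Q) j j := by simp [Matrix.mul_apply]
      _ = ∑ _j : Fin n, (1 : ℝ) := by rw [hQ]; simp [Matrix.one_apply]
      _ = (n : ℝ) := by simp
  rw [Matrix.frobenius_norm_def, key, Real.sqrt_eq_rpow]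

end aux

/-- For a skew-symmetric real `n×n` matrix `S`, the one-parameter group `t ↦ exp (t S)`
returns arbitrarily close to the identity for arbitrarily large times: for every `ε > 0`
and `T > 0` there is `t ≥ T` with `‖exp (t S) − I‖ < ε`. -/
theorem stmt15 (n : ℕ) (S : Matrix (Fin n) (Fin n) ℝ) (hS : Sᵀ = -S)
    (ε : ℝ) (hε : 0 < ε) (T : ℝ) (hT : 0 < T) :
    ∃ t : ℝ, T ≤ t ∧
      ‖NormedSpace.exp (t • S) - (1 : Matrix (Fin n) (Fin n) ℝ)‖ < ε := by
  classical
  set f : ℕ → Matrix (Fin n) (Fin n) ℝ := fun k => NormedSpace.exp (((k : ℝ) * T) • S) with hf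
  have hnorm : ∀ k, ‖f k‖ = Real.sqrt n :=
    fun k => norm_of_orthogonal (exp_skew_orthogonal S hS _)
  -- bounded sequence in a proper space has a convergent subsequence
  have hbdd : ∀ k, f k ∈ Metric.closedBall (0 : Matrix (Fin n) (Fin n) ℝ) (Real.sqrt n) := by
    intro k
    simp [Metric.mem_closedBall, dist_zero_right, hnorm k]
  haveI : ProperSpace (Matrix (Fin n) (Fin n) ℝ) := FiniteDimensional.proper ℝ _
  obtain ⟨a, -, φ, hφ, hlim⟩ := tendsto_subseq_of_bounded
    (Metric.isBounded_closedBall (x := (0 : Matrix (Fin n) (Fin n) ℝ)) (r := Real.sqrt n)) hbdd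
  -- pick two close terms
  set ε' : ℝ := ε / (Real.sqrt n + 1) with hε'
  have hsqrt : (0:ℝ) < Real.sqrt n + 1 := by positivity
  have hε'pos : 0 < ε' := div_pos hε hsqrt
  obtain ⟨N, hN⟩ := (Metric.tendsto_atTop.mp hlim) (ε' / 2) (by positivity)
  have h1 := hN N le_rfl
  have h2 := hN (N + 1) (Nat.le_succ N)
  have hclose : ‖f (φ (N + 1)) - f (φ N)‖ < ε' := by
    have := dist_triangle (f (φ (N+1))) a (f (φ N))
    rw [← dist_eq_norm]
    calc dist (f (φ (N+1))) (f (φ N)) ≤ dist (f (φ (N+1))) a + dist a (f (φ N)) :=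
          dist_triangle _ _ _
      _ < ε' / 2 + ε' / 2 := by
          have := dist_comm a (f (φ N))
          exact add_lt_add h2 (by rw [dist_comm]; exact h1)
      _ = ε' := by ring
  -- the time gap
  have hmono : φ N + 1 ≤ φ (N + 1) := hφ (Nat.lt_succ_self N)
  set a₀ : ℝ := (φ N : ℝ) * T with ha₀
  set b₀ : ℝ := (φ (N + 1) : ℝ) * T with hb₀
  refine ⟨b₀ - a₀, ?_, ?_⟩
  · have hcast : (φ N : ℝ) + 1 ≤ (φ (N+1) : ℝ) := by exact_mod_cast hmono
    have : b₀ - a₀ = ((φ (N+1) : ℝ) - (φ N : ℝ)) * T := by ring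
    rw [this]
    nlinarith
  · have hfactor : NormedSpace.exp ((b₀ - a₀) • S) - 1 =
        NormedSpace.exp ((-a₀) • S) * (f (φ (N + 1)) - f (φ N)) := by
      rw [mul_sub, hf]
      simp only
      rw [exp_smul_mul_exp_smul, exp_smul_mul_exp_smul]
      rw [neg_add_eq_sub, ← hb₀, neg_add_cancel, zero_smul, NormedSpace.exp_zero]
    rw [hfactor]
    have hOrth : ‖NormedSpace.exp ((-a₀) • S)‖ = Real.sqrt n :=
      norm_of_orthogonal (exp_skew_orthogonal S hS _)
    calc ‖NormedSpace.exp ((-a₀) • S) * (f (φ (N + 1)) - f (φ N))‖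
        ≤ ‖NormedSpace.exp ((-a₀) • S)‖ * ‖f (φ (N + 1)) - f (φ N)‖ :=
          Matrix.frobenius_norm_mul _ _
      _ < Real.sqrt n * ε' + ε' := by
          rw [hOrth]
          have hs : (0:ℝ) ≤ Real.sqrt n := Real.sqrt_nonneg n
          nlinarith [hclose, hnorm (φ (N+1)), hnorm (φ N)]
      _ = (Real.sqrt n + 1) * ε' := by ring
      _ = ε := by rw [hε']; field_simp
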